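/- If O ⊆ 𝕋 is a nonempty finite minimal invariant set, then all elements of O have the same additive order: for all x, y ∈ O, addOrderOf x = addOrderOf y. -/
import Mathlib


open MeasureTheory

noncomputable section

/-- The circle `[0,1]` with endpoints identified. -/
abbrev 𝕋 := AddCircle (1 : ℝ)

instance : IsProbabilityMeasure (volume : Measure 𝕋) :=
  ⟨by simp [AddCircle.measure_univ]⟩

/-- The doubling map. -/
def T (x : 𝕋) : 𝕋 := 2 • x

/-- The tripling map. -/
def S (x : 𝕋) : 𝕋 := 3 • x

/-- A set is invariant if it is forward invariant under both `T` and `S`. -/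
def Invariant (O : Set 𝕋) : Prop := T '' O ⊆ O ∧ S '' O ⊆ O

/-- A nonempty finite invariant set is minimal if every nonempty invariant subset equals it. -/
def MinimalInvariant (O : Set 𝕋) : Prop :=
  O.Nonempty ∧ O.Finite ∧ Invariant O ∧
    ∀ O' ⊆ O, O'.Nonempty → Invariant O' → O' = O

/-- A measure is invariant if both `T` and `S` are measure preserving for it. -/
def InvariantMeasure (μ : Measure 𝕋) : Prop :=
  MeasurePreserving T μ μ ∧ MeasurePreserving S μ μ

/-- The normalized counting measure on a set: each point of a finite set `O`
gets mass `1 / |O|`. -/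
def normCount (O : Set 𝕋) : Measure 𝕋 :=
  (O.ncard : ENNReal)⁻¹ • Measure.count.restrict O

/-- `Fn n` is the set of points `i/n` of the circle with `0 < i < n`. -/
def Fn (n : ℕ) : Set 𝕋 := {x : 𝕋 | ∃ i : ℕ, 0 < i ∧ i < n ∧ x = ((i : ℝ) / n : ℝ)}

/-- All elements of a nonempty finite minimal invariant set have the same additive
order. -/
theorem minimal_orbit_same_order (O : Set 𝕋) (hO : MinimalInvariant O) :
    ∀ x ∈ O, ∀ y ∈ O, addOrderOf x = addOrderOf y := by
  obtain ⟨hne, hfin, hinv, hmin⟩ := hO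
  have key : ∀ x ∈ O, ∀ y ∈ O, addOrderOf y ∣ addOrderOf x := by
    intro x hx y hy
    set O' : Set 𝕋 := {z ∈ O | addOrderOf z ∣ addOrderOf x} with hO'
    have hsub : O' ⊆ O := fun z hz => hz.1
    have hinv' : Invariant O' := by
      constructor
      · rintro _ ⟨z, hz, rfl⟩
        exact ⟨hinv.1 ⟨z, hz.1, rfl⟩, (addOrderOf_smul_dvd 2 ).trans hz.2⟩
      · rintro _ ⟨z, hz, rfl⟩
        exact ⟨hinv.2 ⟨z, hz.1, rfl⟩, (addOrderOf_smul_dvd 3 ).trans hz.2⟩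
    have heq : O' = O := hmin O' hsub ⟨x, hx, dvd_refl _⟩ hinv'
    have : y ∈ O' := heq ▸ hy
    exact this.2
  intro x hx y hy
  exact Nat.dvd_antisymm (key y hy x hx) (key x hx y hy)
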